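/- For every integer n ≥ 2 there exists a play of the ordered Zeckendorf game on n of length at least ⌊n²/4⌋ that ends at the state consisting entirely of 2's when n is even, and at the state consisting of a single 1 followed by (n−1)/2 copies of 2 when n is odd. In particular M(n) ≥ ⌊n²/4⌋. -/

import Mathlib

/-- Fibonacci numbers indexed so that `F 1 = 1`, `F 2 = 2`,
and `F (i+1) = F i + F (i-1)`. -/
def F (i : ℕ) : ℕ := Nat.fib (i + 1)

/-- A single legal move of the ordered Zeckendorf game, acting on an
adjacent pair of entries of the list of indices. -/
inductive Move : List ℕ → List ℕ → Prop
  | merge (a b : List ℕ) (i : ℕ) (hi : 1 ≤ i) :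
      Move (a ++ [i, i + 1] ++ b) (a ++ [i + 2] ++ b)
  | mergeOnes (a b : List ℕ) :
      Move (a ++ [1, 1] ++ b) (a ++ [2] ++ b)
  | split (a b : List ℕ) (i : ℕ) (hi : 2 < i) :
      Move (a ++ [i, i] ++ b) (a ++ [i - 2, i + 1] ++ b)
  | splitTwos (a b : List ℕ) :
      Move (a ++ [2, 2] ++ b) (a ++ [1, 3] ++ b)
  | switch (a b : List ℕ) (i j : ℕ) (hj : 1 ≤ j) (hij : j < i) :
      Move (a ++ [i, j] ++ b) (a ++ [j, i] ++ b)

/-- A play of the ordered Zeckendorf game on `n` with `m` moves: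
the initial state is `n` copies of `1`, and each step is a legal move. -/
def IsPlay (n : ℕ) (s : ℕ → List ℕ) (m : ℕ) : Prop :=
  s 0 = List.replicate n 1 ∧ ∀ t < m, Move (s t) (s (t + 1))

/-- A state is terminal if no legal move applies to it. -/
def Terminal (S : List ℕ) : Prop := ∀ T, ¬ Move S T

/-- The total Fibonacci value of a state. -/
def val (S : List ℕ) : ℕ := (S.map F).sum

/-- The monovariant `f(S) = Σ_{j=1}^k (k+1−j)·F_{i_j}` (here with
`j` running over 0-based positions, so the weight of position `j` is
`k − j`). -/
def f (S : List ℕ) : ℕ := ∑ j : Fin S.length, (S.length - (j : ℕ)) * F (S.get j)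

/-- `M n` is the maximal number of moves in a completed play of the
ordered Zeckendorf game on `n`. -/
noncomputable def M (n : ℕ) : ℕ :=
  sSup {m | ∃ s : ℕ → List ℕ, IsPlay n s m ∧ Terminal (s m)}

/-- The golden ratio `φ = (1+√5)/2`. -/
noncomputable def phi : ℝ := (1 + Real.sqrt 5) / 2

/-- Logarithm to base `φ`. -/
noncomputable def logphi (x : ℝ) : ℝ := Real.log x / Real.log phi


/-- monovariant -/
def hh : List ℕ → ℕ
  | [] => 0
  | x :: t => (t.length + 1) * F x + hh t

lemma val_cons (x : ℕ) (l : List ℕ) : val (x :: l) = F x + val l := by simp [val]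
lemma val_nil : val ([] : List ℕ) = 0 := rfl

lemma hh_append (a c : List ℕ) : hh (a ++ c) = hh a + val a * c.length + hh c := by
  induction a with
  | nil => simp [hh, val]
  | cons x a ih => simp [hh, ih, val_cons]; ring

lemma F_pos (i : ℕ) : 0 < F i := Nat.fib_pos.2 (Nat.succ_pos i)

lemma F_add (i : ℕ) : F (i + 2) = F i + F (i + 1) := by
  show Nat.fib (i + 1 + 2) = _
  rw [Nat.fib_add_two]
  rfl

lemma F_succ_lt {k : ℕ} (hk : 1 ≤ k) : F k < F (k + 1) := by
  have h : F (k + 1) = Nat.fib k + F k := by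
    show Nat.fib (k + 2) = _
    rw [Nat.fib_add_two]; rfl
  have h2 : F k = Nat.fib (k + 1) := rfl
  have := Nat.fib_pos.2 hk
  omega

lemma F_lt {i j : ℕ} (hj : 1 ≤ j) (h : j < i) : F j < F i := by
  induction i with
  | zero => omega
  | succ k ih =>
    rcases Nat.lt_or_ge j k with h' | h'
    · have h1 := ih h'
      have h2 := F_succ_lt (show 1 ≤ k by omega)
      omega
    · have : j = k := by omega
      subst this
      exact F_succ_lt hj

lemma hh_move {S T : List ℕ} (m : Move S T) : hh T < hh S := by
  cases m with
  | merge a b i hi =>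
      have h2 := F_add i
      have := F_pos i
      simp only [List.append_assoc, List.cons_append, List.nil_append, hh_append, hh,
        List.length_cons, List.length_nil, List.length_append, val_cons, val_nil]
      nlinarith [Nat.zero_le (val a)]
  | mergeOnes a b =>
      have h1 : F 1 = 1 := by decide
      have h2 : F 2 = 2 := by decide
      simp only [List.append_assoc, List.cons_append, List.nil_append, hh_append, hh,
        List.length_cons, List.length_nil, List.length_append, val_cons, val_nil]
      nlinarith [Nat.zero_le (val a)]
  | split a b i hi =>
      obtain ⟨j, rfl⟩ : ∃ j, i = j + 3 := ⟨i - 3, by omega⟩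
      have e : j + 3 - 2 = j + 1 := by omega
      rw [e]
      have h2 := F_add (j + 1)
      have h3 := F_add (j + 2)
      have hp := F_pos (j + 2)
      simp only [List.append_assoc, List.cons_append, List.nil_append, hh_append, hh,
        List.length_cons, List.length_nil, List.length_append, val_cons, val_nil]
      nlinarith [Nat.zero_le (val a)]
  | splitTwos a b =>
      have h1 : F 1 = 1 := by decide
      have h2 : F 2 = 2 := by decide
      have h3 : F 3 = 3 := by decide
      simp only [List.append_assoc, List.cons_append, List.nil_append, hh_append, hh,
        List.length_cons, List.length_nil, List.length_append, val_cons, val_nil]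
      nlinarith [Nat.zero_le (val a)]
  | switch a b i j hj hij =>
      have := F_lt hj hij
      simp only [List.append_assoc, List.cons_append, List.nil_append, hh_append, hh,
        List.length_cons, List.length_nil, List.length_append, val_cons, val_nil]
      nlinarith [Nat.zero_le (val a)]

inductive PlaySteps : List ℕ → List ℕ → ℕ → Prop
  | refl (S : List ℕ) : PlaySteps S S 0
  | step {S T U : List ℕ} {m : ℕ} : Move S T → PlaySteps T U m → PlaySteps S U (m + 1)

lemma PlaySteps.trans {S T U : List ℕ} {m k : ℕ}
    (h1 : PlaySteps S T m) (h2 : PlaySteps T U k) : PlaySteps S U (m + k) := by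
  induction h1 with
  | refl => simpa using h2
  | step mv _ ih =>
      exact Nat.add_right_comm _ _ _ ▸ PlaySteps.step mv (ih h2)

lemma switchRight (j : ℕ) : ∀ (a c : List ℕ),
    PlaySteps (a ++ [2] ++ List.replicate j 1 ++ c) (a ++ List.replicate j 1 ++ [2] ++ c) j := by
  induction j with
  | zero => intro a c; simpa using PlaySteps.refl _
  | succ k ih =>
      intro a c
      have mv : Move (a ++ [2, 1] ++ (List.replicate k 1 ++ c))
          (a ++ [1, 2] ++ (List.replicate k 1 ++ c)) :=
        Move.switch a _ 2 1 le_rfl (by omega)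
      have h2 := ih (a ++ [1]) c
      have e1 : a ++ [2] ++ List.replicate (k+1) 1 ++ c
          = a ++ [2, 1] ++ (List.replicate k 1 ++ c) := by
        simp [List.replicate_succ]
      have e2 : a ++ [1, 2] ++ (List.replicate k 1 ++ c)
          = (a ++ [1]) ++ [2] ++ List.replicate k 1 ++ c := by simp
      have e3 : (a ++ [1]) ++ List.replicate k 1 ++ [2] ++ c
          = a ++ List.replicate (k+1) 1 ++ [2] ++ c := by
        simp [List.replicate_succ]
      rw [e1]
      exact PlaySteps.step mv (by rw [e2] at *; rw [← e3]; exact h2)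

lemma roundPlay (j : ℕ) (c : List ℕ) :
    PlaySteps (List.replicate (j + 2) 1 ++ c) (List.replicate j 1 ++ [2] ++ c) (j + 1) := by
  have mv : Move ([] ++ [1, 1] ++ (List.replicate j 1 ++ c))
      ([] ++ [2] ++ (List.replicate j 1 ++ c)) := Move.mergeOnes [] _
  have e1 : List.replicate (j + 2) 1 ++ c = [] ++ [1, 1] ++ (List.replicate j 1 ++ c) := by
    simp [List.replicate_succ]
  have e2 : [] ++ [2] ++ (List.replicate j 1 ++ c) = [] ++ [2] ++ List.replicate j 1 ++ c := by
    simp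
  have h2 := switchRight j [] c
  rw [e1]
  have : PlaySteps ([] ++ [1,1] ++ (List.replicate j 1 ++ c))
      (List.replicate j 1 ++ [2] ++ c) (j + 1) := by
    have := PlaySteps.step mv (by rw [e2]; simpa using h2)
    simpa using this
  simpa using this

lemma evenPlay (t : ℕ) : ∀ c : List ℕ,
    PlaySteps (List.replicate (2 * t) 1 ++ c) (List.replicate t 2 ++ c) (t ^ 2) := by
  induction t with
  | zero => intro c; simpa using PlaySteps.refl c
  | succ k ih =>
      intro c
      have h1 : PlaySteps (List.replicate (2 * (k+1)) 1 ++ c)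
          (List.replicate (2 * k) 1 ++ [2] ++ c) (2 * k + 1) := by
        have := roundPlay (2 * k) c
        have e : 2 * (k + 1) = 2 * k + 2 := by omega
        rw [e]; exact this
      have h2 := ih ([2] ++ c)
      have e2 : List.replicate (2*k) 1 ++ [2] ++ c = List.replicate (2*k) 1 ++ ([2] ++ c) := by
        simp
      have e3 : List.replicate k 2 ++ ([2] ++ c) = List.replicate (k+1) 2 ++ c := by
        simp [List.replicate_succ' (n := k)]
      have := h1.trans (by rw [e2]; rw [← e3] at *; exact h2)
      have e4 : 2 * k + 1 + k ^ 2 = (k + 1) ^ 2 := by ring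
      rw [e4] at this; rwa [e3] at this

lemma oddPlay (t : ℕ) : ∀ c : List ℕ,
    PlaySteps (List.replicate (2 * t + 1) 1 ++ c) (1 :: (List.replicate t 2 ++ c)) (t ^ 2 + t) := by
  induction t with
  | zero => intro c; simpa using PlaySteps.refl (1 :: c)
  | succ k ih =>
      intro c
      have h1 : PlaySteps (List.replicate (2 * (k+1) + 1) 1 ++ c)
          (List.replicate (2 * k + 1) 1 ++ [2] ++ c) (2 * k + 2) := by
        have := roundPlay (2 * k + 1) c
        have e : 2 * (k + 1) + 1 = 2 * k + 1 + 2 := by omega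
        rw [e]; exact this
      have h2 := ih ([2] ++ c)
      have e2 : List.replicate (2*k+1) 1 ++ [2] ++ c = List.replicate (2*k+1) 1 ++ ([2] ++ c) := by
        simp
      have e3 : List.replicate k 2 ++ ([2] ++ c) = List.replicate (k+1) 2 ++ c := by
        simp [List.replicate_succ' (n := k)]
      have := h1.trans (by rw [e2]; rw [← e3] at *; exact h2)
      have e4 : 2 * k + 2 + (k ^ 2 + k) = (k + 1) ^ 2 + (k + 1) := by ring
      rw [e4] at this; rwa [e3] at this

/-- Every state reaches a terminal state. -/
lemma toTerminal (S : List ℕ) : ∃ m B, PlaySteps S B m ∧ Terminal B := by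
  by_cases hS : Terminal S
  · exact ⟨0, S, PlaySteps.refl S, hS⟩
  · have : ∃ T, Move S T := by
      by_contra h
      push_neg at h
      exact hS h
    obtain ⟨T, hT⟩ := this
    have hlt : hh T < hh S := hh_move hT
    have ih := toTerminal T
    obtain ⟨m, B, hp, hB⟩ := ih
    exact ⟨m + 1, B, PlaySteps.step hT hp, hB⟩
termination_by hh S

/-- Convert a `PlaySteps` into a play function. -/
lemma playsteps_to_fun {A B : List ℕ} {m : ℕ} (h : PlaySteps A B m) :
    ∃ s : ℕ → List ℕ, s 0 = A ∧ s m = B ∧ ∀ t < m, Move (s t) (s (t + 1)) := by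
  induction h with
  | refl S => exact ⟨fun _ => S, rfl, rfl, by omega⟩
  | @step S T U k mv _ ih =>
      obtain ⟨s, h0, hm, hstep⟩ := ih
      refine ⟨fun t => match t with | 0 => S | (t + 1) => s t, rfl, hm, ?_⟩
      intro t ht
      match t with
      | 0 => simpa [h0] using mv
      | (t + 1) => exact hstep t (by omega)

/-- Each step strictly decreases `hh`, so a play has at most `hh (s 0)` moves. -/
lemma play_bound {n : ℕ} {s : ℕ → List ℕ} {m : ℕ} (h : IsPlay n s m) :
    m ≤ hh (s 0) := by
  have key : ∀ t, t ≤ m → t + hh (s t) ≤ hh (s 0) := by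
    intro t
    induction t with
    | zero => omega
    | succ k ih =>
        intro hk
        have h1 := ih (by omega)
        have h2 := hh_move (h.2 k (by omega))
        omega
  have := key m le_rfl
  omega

lemma main_play (n : ℕ) (hn : 2 ≤ n) :
    ∃ m : ℕ, n ^ 2 / 4 ≤ m ∧
      PlaySteps (List.replicate n 1)
        (if Even n then List.replicate (n / 2) 2
         else 1 :: List.replicate ((n - 1) / 2) 2) m := by
  rcases Nat.even_or_odd n with he | ho
  · obtain ⟨t, rfl⟩ := he
    have e : t + t = 2 * t := by omega
    refine ⟨t ^ 2, ?_, ?_⟩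
    · have : (t + t) ^ 2 = 4 * t ^ 2 := by ring
      omega
    · have h := evenPlay t []
      simp only [List.append_nil] at h
      rw [if_pos (by exact ⟨t, rfl⟩)]
      have e2 : (t + t) / 2 = t := by omega
      rw [e2, e]
      exact h
  · obtain ⟨t, rfl⟩ := ho
    refine ⟨t ^ 2 + t, ?_, ?_⟩
    · have : (2 * t + 1) ^ 2 = 4 * (t ^ 2 + t) + 1 := by ring
      omega
    · have h := oddPlay t []
      simp only [List.append_nil] at h
      rw [if_neg (by simp [Nat.even_add_one, Nat.even_mul])]
      have e2 : (2 * t + 1 - 1) / 2 = t := by omega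
      rw [e2]
      exact h

theorem stmt_14 (n : ℕ) (hn : 2 ≤ n) :
    (∃ (s : ℕ → List ℕ) (m : ℕ), IsPlay n s m ∧ n ^ 2 / 4 ≤ m ∧
      s m = if Even n then List.replicate (n / 2) 2
            else 1 :: List.replicate ((n - 1) / 2) 2) ∧
    n ^ 2 / 4 ≤ M n := by
  obtain ⟨m, hm, hp⟩ := main_play n hn
  constructor
  · obtain ⟨s, h0, hsm, hstep⟩ := playsteps_to_fun hp
    exact ⟨s, m, ⟨h0, hstep⟩, hm, hsm⟩
  · obtain ⟨m', B, hp', hB⟩ := toTerminal _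
    have hfull := hp.trans hp'
    obtain ⟨s, h0, hsm, hstep⟩ := playsteps_to_fun hfull
    have hmem : m + m' ∈ {k | ∃ s : ℕ → List ℕ, IsPlay n s k ∧ Terminal (s k)} :=
      ⟨s, ⟨h0, hstep⟩, by rw [hsm]; exact hB⟩
    have hbdd : BddAbove {k | ∃ s : ℕ → List ℕ, IsPlay n s k ∧ Terminal (s k)} := by
      refine ⟨hh (List.replicate n 1), ?_⟩
      rintro k ⟨s, hplay, -⟩
      have := play_bound hplay
      rwa [hplay.1] at this
    have hle : m + m' ≤ M n := le_csSup hbdd hmem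
    omega
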